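/- Let f : ℝⁿ → ℝ be differentiable with L-Lipschitz gradient, and suppose pruning group g causes degradation at least ε > 0, i.e., f(x + s) ≥ f(x) + ε where [s]_g = −[x]_g and s is zero elsewhere. Then ‖[x]_g‖ ≥ (−‖[∇f(x)]_g‖ + √(‖[∇f(x)]_g‖² + 2Lε)) / L; in particular, an ε-indispensable group cannot have arbitrarily small norm. -/

import Mathlib

open RealInnerProductSpace

/-- Descent lemma: for `f` with `L`-Lipschitz gradient,
`f (x+s) ≤ f x + ⟪∇f x, s⟫ + L/2 ‖s‖²`. -/
lemma descent_lemma {E : Type*} [NormedAddCommGroup E] [InnerProductSpace ℝ E]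
    [CompleteSpace E] (f : E → ℝ) (L : ℝ) (hL : 0 ≤ L)
    (hdiff : Differentiable ℝ f) (hlip : LipschitzWith (Real.toNNReal L) (gradient f))
    (x s : E) :
    f (x + s) ≤ f x + ⟪gradient f x, s⟫ + L / 2 * ‖s‖ ^ 2 := by
  have hgrad : ∀ y : E, ∀ v : E, fderiv ℝ f y v = ⟪gradient f y, v⟫ := by
    intro y v
    rw [gradient, InnerProductSpace.toDual_symm_apply]
  set c : ℝ := ⟪gradient f x, s⟫ with hc
  set k : ℝ := L / 2 * ‖s‖ ^ 2 with hk
  set φ : ℝ → ℝ := fun t => f (x + t • s) - t * c - t ^ 2 * k with hφ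
  have hline : ∀ t : ℝ, HasDerivAt (fun t : ℝ => x + t • s) s t := by
    intro t
    simpa using ((hasDerivAt_id t).smul_const s).const_add x
  have hφd : ∀ t : ℝ, HasDerivAt φ (⟪gradient f (x + t • s), s⟫ - c - 2 * t * k) t := by
    intro t
    have h1 : HasDerivAt (fun t : ℝ => f (x + t • s)) (⟪gradient f (x + t • s), s⟫) t := by
      have := (hdiff (x + t • s)).hasFDerivAt.comp_hasDerivAt t (hline t)
      rw [hgrad] at this
      exact this
    have h2 : HasDerivAt (fun t : ℝ => t * c) c t := hasDerivAt_mul_const c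
    have h3 : HasDerivAt (fun t : ℝ => t ^ 2 * k) (2 * t * k) t := by
      have := (hasDerivAt_pow 2 t).mul_const k
      simpa [mul_comm, mul_assoc] using this
    exact (h1.sub h2).sub h3
  have hanti : AntitoneOn φ (Set.Icc 0 1) := by
    apply antitoneOn_of_deriv_nonpos (convex_Icc 0 1)
    · exact ((hdiff.comp ((differentiable_id.smul_const s).const_add x)).continuous.sub
        (continuous_id.mul continuous_const)).continuousOn.sub
        ((continuous_pow 2).mul continuous_const).continuousOn
    · intro t _
      exact (hφd t).differentiableAt.differentiableWithinAt
    · intro t ht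
      rw [interior_Icc] at ht
      rw [(hφd t).deriv]
      have hcs : ⟪gradient f (x + t • s) - gradient f x, s⟫ ≤
          ‖gradient f (x + t • s) - gradient f x‖ * ‖s‖ := real_inner_le_norm _ _
      have hlb : ‖gradient f (x + t • s) - gradient f x‖ ≤ L * (t * ‖s‖) := by
        have := hlip.dist_le_mul (x + t • s) x
        rw [dist_eq_norm, dist_eq_norm] at this
        have h0 : x + t • s - x = t • s := by abel
        rw [h0, norm_smul, Real.norm_eq_abs, abs_of_pos ht.1,
          Real.coe_toNNReal L hL] at this
        exact this
      have hsplit : ⟪gradient f (x + t • s), s⟫ - c =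
          ⟪gradient f (x + t • s) - gradient f x, s⟫ := by
        rw [hc, inner_sub_left]
      have hns : (0:ℝ) ≤ ‖s‖ := norm_nonneg s
      nlinarith [mul_le_mul_of_nonneg_right hlb hns, hcs, ht.1.le]
  have h01 := hanti (Set.left_mem_Icc.2 zero_le_one) (Set.right_mem_Icc.2 zero_le_one)
    zero_le_one
  have hφ0 : φ 0 = f x := by simp [hφ]
  have hφ1 : φ 1 = f (x + s) - c - k := by simp [hφ]
  rw [hφ0, hφ1] at h01
  linarith

/-- The restriction `[x]_g` of a vector to a coordinate group `g` (zero elsewhere). -/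
def groupMask {n : ℕ} (x : EuclideanSpace ℝ (Fin n)) (g : Finset (Fin n)) :
    EuclideanSpace ℝ (Fin n) :=
  WithLp.toLp 2 (fun i => if i ∈ g then x i else 0)

/-- The pruning direction `s` with `[s]_g = −[x]_g` and zero elsewhere. -/
def pruneDir {n : ℕ} (x : EuclideanSpace ℝ (Fin n)) (g : Finset (Fin n)) :
    EuclideanSpace ℝ (Fin n) :=
  WithLp.toLp 2 (fun i => if i ∈ g then -x i else 0)

lemma pruneDir_eq_neg_mask {n : ℕ} (x : EuclideanSpace ℝ (Fin n)) (g : Finset (Fin n)) :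
    pruneDir x g = -groupMask x g := by
  ext i
  simp only [pruneDir, groupMask, PiLp.neg_apply, PiLp.toLp_apply]
  split_ifs <;> simp

lemma inner_mask {n : ℕ} (y x : EuclideanSpace ℝ (Fin n)) (g : Finset (Fin n)) :
    ⟪y, groupMask x g⟫ = ⟪groupMask y g, groupMask x g⟫ := by
  simp only [PiLp.inner_apply, RCLike.inner_apply, conj_trivial]
  apply Finset.sum_congr rfl
  intro i _
  by_cases h : i ∈ g <;> simp [groupMask, h]

/-- An `ε`-indispensable group cannot have arbitrarily small norm: if `f` has `L`-Lipschitz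
gradient and pruning group `g` (setting `[x]_g → 0`) increases `f` by at least `ε > 0`, then
`‖[x]_g‖ ≥ (−‖[∇f(x)]_g‖ + √(‖[∇f(x)]_g‖² + 2Lε))/L`. -/
theorem indispensable_group_norm_lower_bound
    {n : ℕ} (f : EuclideanSpace ℝ (Fin n) → ℝ) (x : EuclideanSpace ℝ (Fin n))
    (g : Finset (Fin n)) (L ε : ℝ) (hL : 0 < L) (hε : 0 < ε)
    (hdiff : Differentiable ℝ f)
    (hlip : LipschitzWith (Real.toNNReal L) (gradient f))
    (hcollapse : f x + ε ≤ f (x + pruneDir x g)) :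
    (-‖groupMask (gradient f x) g‖ +
        Real.sqrt (‖groupMask (gradient f x) g‖ ^ 2 + 2 * L * ε)) / L ≤
      ‖groupMask x g‖ := by
  set a : ℝ := ‖groupMask (gradient f x) g‖ with ha
  set r : ℝ := ‖groupMask x g‖ with hr
  have ha0 : 0 ≤ a := norm_nonneg _
  have hr0 : 0 ≤ r := norm_nonneg _
  -- descent lemma applied to s = pruneDir x g
  have hdesc := descent_lemma f L hL.le hdiff hlip x (pruneDir x g)
  have hnorm : ‖pruneDir x g‖ = r := by rw [pruneDir_eq_neg_mask, norm_neg]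
  have hinner : ⟪gradient f x, pruneDir x g⟫ ≤ a * r := by
    rw [pruneDir_eq_neg_mask, inner_neg_right, inner_mask]
    have := real_inner_le_norm (groupMask (gradient f x) g) (groupMask x g)
    have habs := abs_real_inner_le_norm (groupMask (gradient f x) g) (groupMask x g)
    nlinarith [abs_nonneg (⟪groupMask (gradient f x) g, groupMask x g⟫),
      neg_abs_le (⟪groupMask (gradient f x) g, groupMask x g⟫)]
  rw [hnorm] at hdesc
  have hkey : ε ≤ a * r + L / 2 * r ^ 2 := by linarith
  -- arithmetic
  rw [div_le_iff₀ hL]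
  have hsq : a ^ 2 + 2 * L * ε ≤ (a + r * L) ^ 2 := by nlinarith
  have := Real.sqrt_le_sqrt hsq
  rw [Real.sqrt_sq (by positivity)] at this
  linarith
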